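/- arXiv:2210.15260 — 5 statements merged into one kernel-verified Lean document; each statement's English description precedes it below -/
import Mathlib

section
/- The discrete weight function of the Pastro biorthogonality is invariant under the simultaneous substitutions b ↦ b^{-1} q^{2-N} and s ↦ N - s - 1: for every positive integer N and every s ∈ {0, 1, ..., N-1}, w_s(b) = w_{N-1-s}(b^{-1} q^{2-N}), where w_s(b) = [1/(b;q)_{N-1}] · [(q^{1-N};q)_s / (q;q)_s] · (b q^{N-1})^s. -/
/-- The q-Pochhammer symbol `(z;q)_k = ∏_{j=0}^{k-1} (1 - z q^j)`. -/
noncomputable def qPoch (q z : ℝ) (k : ℕ) : ℝ :=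
  ∏ j ∈ Finset.range k, (1 - z * q ^ j)

/-- The discrete weight `w_s` of the Pastro biorthogonality on the real line. -/
noncomputable def pastroW (q b : ℝ) (N s : ℕ) : ℝ :=
  (qPoch q b (N - 1))⁻¹ * (qPoch q (q ^ (1 - (N : ℤ))) s / qPoch q q s) *
    (b * q ^ ((N : ℤ) - 1)) ^ s

lemma poch_reversal (q b : ℝ) (hq : q ≠ 0) (hb : b ≠ 0) (n : ℕ) :
    qPoch q b n = (-b)^n * (∏ j ∈ Finset.range n, q^j) *
      qPoch q (b⁻¹ * q^(1 - (n:ℤ))) n := by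
  unfold qPoch
  rw [← Finset.prod_range_reflect (fun j => (1 : ℝ) - b * q ^ j) n,
      ← Finset.prod_range_reflect (fun j => (q:ℝ) ^ j) n]
  have hcard : ((-b : ℝ))^n = ∏ _j ∈ Finset.range n, (-b) := by
    rw [Finset.prod_const, Finset.card_range]
  rw [hcard, ← Finset.prod_mul_distrib, ← Finset.prod_mul_distrib]
  refine Finset.prod_congr rfl fun j hj => ?_
  rw [Finset.mem_range] at hj
  have hn1 : (1 : ℤ) - (n:ℤ) = -(((n-1 : ℕ) : ℤ)) := by omega
  have hc : q ^ (1 - (n:ℤ)) = (q ^ (n-1 : ℕ))⁻¹ := by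
    rw [hn1, zpow_neg, zpow_natCast]
  have hsub : q ^ (n - 1 - j) = q ^ (n-1) * (q ^ j)⁻¹ := by
    rw [← pow_sub₀ q hq (by omega)]
  rw [hc, hsub]
  have h1 : (q:ℝ) ^ (n-1) ≠ 0 := pow_ne_zero _ hq
  have h2 : (q:ℝ) ^ j ≠ 0 := pow_ne_zero _ hq
  field_simp
  ring

lemma poch_shift (q : ℝ) (hq : q ≠ 0) (s t : ℕ) :
    (q^(s+t))^s * qPoch q ((q^(s+t))⁻¹) s * qPoch q q t
      = (-1)^s * (∏ j ∈ Finset.range s, q^j) * qPoch q q (s+t) := by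
  have hsplit : qPoch q q (s+t) = qPoch q q t * ∏ j ∈ Finset.range s, (1 - q^(t+1+j)) := by
    unfold qPoch
    rw [add_comm s t, Finset.prod_range_add]
    congr 1
    refine Finset.prod_congr rfl fun j hj => ?_
    rw [← pow_succ']
    congr 2
    omega
  rw [hsplit, ← Finset.prod_range_reflect (fun j => (1:ℝ) - q^(t+1+j)) s]
  have hcard : ((q : ℝ)^(s+t))^s = ∏ _j ∈ Finset.range s, (q^(s+t)) := by
    rw [Finset.prod_const, Finset.card_range]
  have hcard2 : ((-1 : ℝ))^s = ∏ _j ∈ Finset.range s, (-1 : ℝ) := by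
    rw [Finset.prod_const, Finset.card_range]
  rw [hcard, hcard2]
  unfold qPoch
  rw [← Finset.prod_mul_distrib, ← Finset.prod_mul_distrib]
  have key : ∀ x ∈ Finset.range s,
      q^(s+t) * (1 - (q^(s+t))⁻¹ * q^x) = (-1 * q^x) * (1 - q^(t+1+(s-1-x))) := by
    intro x hx
    rw [Finset.mem_range] at hx
    have h : (q:ℝ)^x * q^(t+1+(s-1-x)) = q^(s+t) := by rw [← pow_add]; congr 1; omega
    have hn : (q:ℝ)^(s+t) ≠ 0 := pow_ne_zero _ hq
    field_simp
    linear_combination -h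
  rw [Finset.prod_congr rfl key, Finset.prod_mul_distrib]
  ring

/-- The discrete weight function is invariant under the simultaneous
substitutions `b ↦ b⁻¹ q^(2-N)` and `s ↦ N - s - 1`. -/
theorem pastro_weight_symmetry (q b : ℝ) (hq : q ≠ 0) (hq1 : ∀ k : ℤ, k ≠ 0 → q ^ k ≠ 1)
    (hb : b ≠ 0) (hbq : ∀ m : ℤ, b * q ^ m ≠ 1)
    (N : ℕ) (hN : 0 < N) (s : ℕ) (hs : s < N) :
    pastroW q b N s = pastroW q (b⁻¹ * q ^ (2 - (N : ℤ))) N (N - 1 - s) := by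
  obtain ⟨t, rfl⟩ : ∃ t, N = s + t + 1 := ⟨N - s - 1, by omega⟩
  -- nonvanishing facts
  have hQ : ∀ k : ℕ, qPoch q q k ≠ 0 := by
    intro k
    refine Finset.prod_ne_zero_iff.mpr fun j hj h => ?_
    have : q ^ ((j+1 : ℕ) : ℤ) = 1 := by
      rw [zpow_natCast, pow_succ']; rw [sub_eq_zero] at h; exact h.symm
    exact hq1 _ (by positivity) this
  have hBne : qPoch q b (s+t) ≠ 0 := by
    refine Finset.prod_ne_zero_iff.mpr fun j hj h => ?_
    have : b * q ^ ((j : ℕ) : ℤ) = 1 := by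
      rw [zpow_natCast]; rw [sub_eq_zero] at h; exact h.symm
    exact hbq _ this
  -- zpow simplifications
  have hz1 : q ^ (1 - ((s+t+1 : ℕ) : ℤ)) = (q^(s+t))⁻¹ := by
    rw [show (1 - ((s+t+1 : ℕ) : ℤ)) = -((s+t : ℕ) : ℤ) by push_cast; ring,
        zpow_neg, zpow_natCast]
  have hz2 : q ^ (((s+t+1 : ℕ) : ℤ) - 1) = q^(s+t) := by
    rw [show (((s+t+1 : ℕ) : ℤ) - 1) = ((s+t : ℕ) : ℤ) by push_cast; ring, zpow_natCast]
  have hz3 : q ^ (2 - ((s+t+1 : ℕ) : ℤ)) = q ^ (1 - ((s+t : ℕ) : ℤ)) := by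
    congr 1; push_cast; ring
  have hsub1 : s + t + 1 - 1 = s + t := by omega
  have hsub2 : s + t + 1 - 1 - s = t := by omega
  unfold pastroW
  have hsub3 : s + t - s = t := by omega
  rw [hsub1, hsub3, hz1, hz2, hz3]
  -- rewrite the base of the last power on the RHS
  have hbase : q ^ (1 - ((s+t : ℕ):ℤ)) * q^(s+t) = q := by
    rw [← zpow_natCast q (s+t), ← zpow_add₀ hq]; norm_num
  rw [mul_assoc b⁻¹, hbase]
  -- notation
  have hPs0 : (∏ j ∈ Finset.range s, (q:ℝ)^j) ≠ 0 := Finset.prod_ne_zero_iff.mpr fun j _ => pow_ne_zero _ hq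
  have hPt0 : (∏ j ∈ Finset.range t, (q:ℝ)^j) ≠ 0 := Finset.prod_ne_zero_iff.mpr fun j _ => pow_ne_zero _ hq
  have hPn0 : (∏ j ∈ Finset.range (s+t), (q:ℝ)^j) ≠ 0 := Finset.prod_ne_zero_iff.mpr fun j _ => pow_ne_zero _ hq
  have hqn : ((q:ℝ)^(s+t)) ≠ 0 := pow_ne_zero _ hq
  have hrev := poch_reversal q b hq hb (s+t)
  have hB'ne : qPoch q (b⁻¹ * q ^ (1 - ((s+t : ℕ):ℤ))) (s+t) ≠ 0 := by
    intro h0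
    apply hBne
    rw [hrev, h0, mul_zero]
  have h1 := poch_shift q hq s t
  have h2 := poch_shift q hq t s
  rw [add_comm t s] at h2
  have eAs : qPoch q ((q^(s+t))⁻¹) s
      = ((-1)^s * (∏ j ∈ Finset.range s, q^j) * qPoch q q (s+t)) / ((q^(s+t))^s * qPoch q q t) := by
    rw [eq_div_iff (by exact mul_ne_zero (pow_ne_zero _ hqn) (hQ t))]
    linear_combination h1
  have eAt : qPoch q ((q^(s+t))⁻¹) t
      = ((-1)^t * (∏ j ∈ Finset.range t, q^j) * qPoch q q (s+t)) / ((q^(s+t))^t * qPoch q q s) := by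
    rw [eq_div_iff (by exact mul_ne_zero (pow_ne_zero _ hqn) (hQ s))]
    linear_combination h2
  have eB' : qPoch q (b⁻¹ * q ^ (1 - ((s+t : ℕ):ℤ))) (s+t)
      = qPoch q b (s+t) / ((-b)^(s+t) * ∏ j ∈ Finset.range (s+t), q^j) := by
    rw [eq_div_iff (by exact mul_ne_zero (pow_ne_zero _ (neg_ne_zero.mpr hb)) hPn0)]
    linear_combination -hrev
  have hPsplit : (∏ j ∈ Finset.range (s+t), (q:ℝ)^j)
      = (∏ j ∈ Finset.range s, q^j) * (∏ j ∈ Finset.range t, q^j) * q^(s*t) := by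
    rw [Finset.prod_range_add, Finset.prod_congr rfl (fun j _ => pow_add q s j),
        Finset.prod_mul_distrib, Finset.prod_const, Finset.card_range, ← pow_mul]
    ring
  have hPt2 : (∏ j ∈ Finset.range t, (q:ℝ)^j) * (∏ j ∈ Finset.range t, (q:ℝ)^j) * q^t
      = q^(t*t) := by
    nth_rewrite 1 [← Finset.prod_range_reflect (fun j => (q:ℝ)^j) t]
    rw [← Finset.prod_mul_distrib,
        Finset.prod_congr rfl (fun j hj => by
          rw [← pow_add]
          congr 1
          rw [Finset.mem_range] at hj
          omega : ∀ j ∈ Finset.range t, (q:ℝ)^(t-1-j) * q^j = q^(t-1)),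
        Finset.prod_const, Finset.card_range, ← pow_mul, ← pow_add]
    congr 1
    rcases t with _ | n
    · simp
    · simp
      ring
  rw [eAs, eAt, eB', hPsplit]
  have hQs := hQ s
  have hQt := hQ t
  have hQn := hQ (s+t)
  have hneg : ((-1:ℝ))^(t*2) = 1 := by rw [mul_comm, pow_mul]; norm_num
  field_simp
  have hb' : (q/b)^t * b^t = q^t := by rw [← mul_pow, div_mul_cancel₀ q hb]
  linear_combination (-((q^(s+t))^s * (-1)^s * b^s * q^(s*t) * (-1)^(t*2) * (∏ j ∈ Finset.range t, q^j)^2)) * hb'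
    - ((q^(s+t))^s * (-1)^s * b^s * q^(s*t) * (-1)^(t*2)) * hPt2
    - ((q^(s+t))^s * (-1)^s * b^s * q^(s*t) * q^(t*t)) * hneg
end

section
/- The biorthogonal partners of the Pastro polynomials on the q-grid are, up to normalization, Pastro polynomials with transformed parameters: for every positive integer N and every n ∈ {0, 1, ..., N-1}, there exists a nonzero real constant ν_n (independent of s) such that for all s ∈ {0, 1, ..., N-1}, R_n(q^{s+1}; q^{1-N}, b; q) = ν_n P_n(q^{N-s}; q^{1-N}, b^{-1} q^{2-N}; q). -/
/-- Coefficient `c_{n,k}` of the monic Pastro polynomial. -/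
noncomputable def pastroCoeff (q a b : ℝ) (n k : ℕ) : ℝ :=
  (qPoch q (a⁻¹ * b * q ^ (1 - (n : ℤ))) n * qPoch q q n /
      (qPoch q (q ^ (-(n : ℤ))) n * qPoch q b n)) *
    (qPoch q (q ^ (-(n : ℤ))) k * qPoch q b k /
      (qPoch q (a⁻¹ * b * q ^ (1 - (n : ℤ))) k * qPoch q q k))

/-- The monic Pastro polynomial `P_n(x;a,b;q)`. -/
noncomputable def pastroP (q a b : ℝ) (n : ℕ) (x : ℝ) : ℝ :=
  ∑ k ∈ Finset.range (n + 1), pastroCoeff q a b n k * x ^ k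

/-- The biorthogonal partner `R_n(x;a,b;q)` of the Pastro polynomials. -/
noncomputable def pastroR (q a b : ℝ) (n : ℕ) (x : ℝ) : ℝ :=
  (qPoch q (q ^ (-(n : ℤ))) n * qPoch q (b * q⁻¹) n /
      (qPoch q (a⁻¹ * b * q ^ (-(n : ℤ))) n * qPoch q q n)) *
    ∑ k ∈ Finset.range (n + 1),
      (qPoch q (q ^ (-(n : ℤ))) k * qPoch q (a * b⁻¹ * q) k /
          (qPoch q (b⁻¹ * q ^ (2 - (n : ℤ))) k * qPoch q q k)) *
        (q ^ 2 / (a * x)) ^ k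

lemma qPoch_ne_zero {q z : ℝ} {k : ℕ} (h : ∀ j, j < k → z * q ^ j ≠ 1) :
    qPoch q z k ≠ 0 := by
  unfold qPoch
  rw [Finset.prod_ne_zero_iff]
  intro j hj hc
  exact h j (Finset.mem_range.mp hj) (by linarith [sub_eq_zero.mp hc])

lemma qPoch_b_ne_zero {q b : ℝ} (hq : q ≠ 0) (hbq : ∀ m : ℤ, b * q ^ m ≠ 1)
    (m : ℤ) (k : ℕ) : qPoch q (b * q ^ m) k ≠ 0 := by
  refine qPoch_ne_zero fun j _ => ?_
  rw [mul_assoc, ← zpow_natCast q j, ← zpow_add₀ hq]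
  exact hbq _

lemma qPoch_binv_ne_zero {q b : ℝ} (hq : q ≠ 0) (hb : b ≠ 0)
    (hbq : ∀ m : ℤ, b * q ^ m ≠ 1) (m : ℤ) (k : ℕ) :
    qPoch q (b⁻¹ * q ^ m) k ≠ 0 := by
  refine qPoch_ne_zero fun j _ hc => ?_
  rw [mul_assoc, ← zpow_natCast q j, ← zpow_add₀ hq] at hc
  have hbv : b = q ^ (m + (j : ℤ)) := by
    field_simp at hc
    linarith [hc]
  exact hbq (-(m + (j : ℤ))) (by rw [hbv, ← zpow_add₀ hq, add_neg_cancel, zpow_zero])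

lemma qPoch_q_ne_zero {q : ℝ} (hq1 : ∀ k : ℤ, k ≠ 0 → q ^ k ≠ 1) (k : ℕ) :
    qPoch q q k ≠ 0 := by
  refine qPoch_ne_zero fun j _ => ?_
  have := hq1 ((j : ℤ) + 1) (by positivity)
  rwa [show ((j:ℤ)+1) = ((j+1 : ℕ) : ℤ) by push_cast; ring, zpow_natCast, pow_succ,
    mul_comm] at this

lemma qPoch_qn_ne_zero {q : ℝ} (hq : q ≠ 0) (hq1 : ∀ k : ℤ, k ≠ 0 → q ^ k ≠ 1) (n : ℕ) :
    qPoch q (q ^ (-(n : ℤ))) n ≠ 0 := by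
  refine qPoch_ne_zero fun j hj => ?_
  rw [← zpow_natCast q j, ← zpow_add₀ hq]
  exact hq1 _ (by omega)

/-- On the q-grid, the biorthogonal partners are, up to normalization, Pastro
polynomials with transformed parameters. -/
theorem pastro_partner_transform (q b : ℝ) (hq : q ≠ 0) (hq1 : ∀ k : ℤ, k ≠ 0 → q ^ k ≠ 1)
    (hb : b ≠ 0) (hbq : ∀ m : ℤ, b * q ^ m ≠ 1)
    (N : ℕ) (hN : 0 < N) (n : ℕ) (hn : n < N) :
    ∃ ν : ℝ, ν ≠ 0 ∧ ∀ s : ℕ, s < N →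
      pastroR q (q ^ (1 - (N : ℤ))) b n (q ^ (s + 1)) =
        ν * pastroP q (q ^ (1 - (N : ℤ))) (b⁻¹ * q ^ (2 - (N : ℤ))) n (q ^ ((N : ℤ) - s)) := by
  set a : ℝ := q ^ (1 - (N : ℤ)) with ha
  -- key zpow identities
  have e1 : a * b⁻¹ * q = b⁻¹ * q ^ (2 - (N : ℤ)) := by
    rw [ha, show (2 - (N:ℤ)) = (1 - N) + 1 by ring, zpow_add₀ hq, zpow_one]; ring
  have e2 : a⁻¹ * b * q ^ (-(n : ℤ)) = b * q ^ ((N : ℤ) - 1 - n) := by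
    rw [ha, ← zpow_neg, show ((N:ℤ) - 1 - n) = -(1 - N) + -(n : ℤ) by ring, zpow_add₀ hq]
    ring
  have e3 : a⁻¹ * (b⁻¹ * q ^ (2 - (N : ℤ))) * q ^ (1 - (n : ℤ)) = b⁻¹ * q ^ (2 - (n : ℤ)) := by
    rw [ha, ← zpow_neg, show (2 - (n:ℤ)) = -(1 - N) + ((2 - N) + (1 - n)) by ring,
      zpow_add₀ hq, zpow_add₀ hq]
    ring
  -- nonvanishing of the normalizing constants
  have hCRnum : qPoch q (q ^ (-(n : ℤ))) n * qPoch q (b * q⁻¹) n ≠ 0 := by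
    refine mul_ne_zero (qPoch_qn_ne_zero hq hq1 n) ?_
    have := qPoch_b_ne_zero hq hbq (-1) n
    rwa [zpow_neg_one] at this
  have hCRden : qPoch q (b * q ^ ((N:ℤ) - 1 - n)) n * qPoch q q n ≠ 0 :=
    mul_ne_zero (qPoch_b_ne_zero hq hbq _ n) (qPoch_q_ne_zero hq1 n)
  have hCPnum : qPoch q (b⁻¹ * q ^ (2 - (n:ℤ))) n * qPoch q q n ≠ 0 :=
    mul_ne_zero (qPoch_binv_ne_zero hq hb hbq _ n) (qPoch_q_ne_zero hq1 n)
  have hCPden : qPoch q (q ^ (-(n : ℤ))) n * qPoch q (b⁻¹ * q ^ (2 - (N:ℤ))) n ≠ 0 :=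
    mul_ne_zero (qPoch_qn_ne_zero hq hq1 n) (qPoch_binv_ne_zero hq hb hbq _ n)
  set CR : ℝ := qPoch q (q ^ (-(n : ℤ))) n * qPoch q (b * q⁻¹) n /
      (qPoch q (b * q ^ ((N:ℤ) - 1 - n)) n * qPoch q q n) with hCR
  set CP : ℝ := qPoch q (b⁻¹ * q ^ (2 - (n:ℤ))) n * qPoch q q n /
      (qPoch q (q ^ (-(n : ℤ))) n * qPoch q (b⁻¹ * q ^ (2 - (N:ℤ))) n) with hCP
  have hCR0 : CR ≠ 0 := div_ne_zero hCRnum hCRden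
  have hCP0 : CP ≠ 0 := div_ne_zero hCPnum hCPden
  refine ⟨CR / CP, div_ne_zero hCR0 hCP0, fun s hs => ?_⟩
  have e4 : q ^ 2 / (a * q ^ (s + 1)) = q ^ ((N : ℤ) - s) := by
    rw [ha, show (q : ℝ) ^ 2 = q ^ ((2:ℕ) : ℤ) by rw [zpow_natCast],
      show (q : ℝ) ^ (s + 1) = q ^ (((s+1:ℕ)) : ℤ) by rw [zpow_natCast],
      ← zpow_add₀ hq, ← zpow_sub₀ hq]
    congr 1
    push_cast
    ring
  have hR : pastroR q a b n (q ^ (s + 1)) = CR *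
      ∑ k ∈ Finset.range (n + 1),
        (qPoch q (q ^ (-(n : ℤ))) k * qPoch q (b⁻¹ * q ^ (2 - (N:ℤ))) k /
            (qPoch q (b⁻¹ * q ^ (2 - (n : ℤ))) k * qPoch q q k)) *
          (q ^ ((N : ℤ) - s)) ^ k := by
    unfold pastroR
    rw [e1, e2, e4]
  have hP : pastroP q a (b⁻¹ * q ^ (2 - (N:ℤ))) n (q ^ ((N : ℤ) - s)) = CP *
      ∑ k ∈ Finset.range (n + 1),
        (qPoch q (q ^ (-(n : ℤ))) k * qPoch q (b⁻¹ * q ^ (2 - (N:ℤ))) k /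
            (qPoch q (b⁻¹ * q ^ (2 - (n : ℤ))) k * qPoch q q k)) *
          (q ^ ((N : ℤ) - s)) ^ k := by
    unfold pastroP pastroCoeff
    rw [e3, Finset.mul_sum]
    refine Finset.sum_congr rfl fun k _ => by ring
  rw [hR, hP]
  field_simp
end

section
/- The triplet of q-difference operators X, Y, Z satisfies the three Pastro-algebra commutation relations: for every function f : ℝ → ℝ and every real x ≠ 0, (i) q·(XY - q^{-1}YX)f(x), i.e. q(XY f)(x) - (YX f)(x) = q(q-1)( a^{-1} (Xf)(x) + (Yf)(x) ); (ii) q(YZ f)(x) - (ZY f)(x) = (q-1)( -b^{-1}q^{-1}(1+q) (Xf)(x) - b (Yf)(x) + a^{-1}q (Zf)(x) + a^{-1}b^{-1}(1-b)(a-bq) f(x) ); (iii) q(ZX f)(x) - (XZ f)(x) = (q-1)( -b (Xf)(x) + q (Zf)(x) ). -/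
/-- The q-difference operator `X`. -/
noncomputable def opX (q b : ℝ) (f : ℝ → ℝ) (x : ℝ) : ℝ :=
  (x - q) * f (q⁻¹ * x) + (q - b * x) * f x

/-- The q-difference operator `Y`. -/
noncomputable def opY (q a b : ℝ) (f : ℝ → ℝ) (x : ℝ) : ℝ :=
  (x - a⁻¹ * q) * f (q * x) + (a⁻¹ * q - b⁻¹ * x) * f x

/-- The q-difference operator `Z`. -/
noncomputable def opZ (q b : ℝ) (f : ℝ → ℝ) (x : ℝ) : ℝ :=
  (1 - q * x⁻¹) * f (q⁻¹ * x) + (q * x⁻¹ - b) * f x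

set_option maxHeartbeats 2000000 in
/-- The commutation relations of the Pastro algebra realized by the triplet of
q-difference operators `X, Y, Z`. -/
theorem pastro_algebra_relations (q a b : ℝ) (hq0 : q ≠ 0) (hq1 : q ≠ 1) (ha : a ≠ 0) (hb : b ≠ 0)
    (f : ℝ → ℝ) (x : ℝ) (hx : x ≠ 0) :
    (q * opX q b (opY q a b f) x - opY q a b (opX q b f) x =
        q * (q - 1) * (a⁻¹ * opX q b f x + opY q a b f x)) ∧
    (q * opY q a b (opZ q b f) x - opZ q b (opY q a b f) x =
        (q - 1) * (-b⁻¹ * q⁻¹ * (1 + q) * opX q b f x - b * opY q a b f x +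
          a⁻¹ * q * opZ q b f x + a⁻¹ * b⁻¹ * (1 - b) * (a - b * q) * f x)) ∧
    (q * opZ q b (opX q b f) x - opX q b (opZ q b f) x =
        (q - 1) * (-b * opX q b f x + q * opZ q b f x)) := by
  have h1 : q⁻¹ * (q * x) = x := by field_simp
  have h2 : q * (q⁻¹ * x) = x := by field_simp
  refine ⟨?_, ?_, ?_⟩ <;>
    · simp only [opX, opY, opZ, h1, h2, mul_inv_rev]
      generalize f x = u
      generalize f (q * x) = v
      generalize f (q⁻¹ * x) = w
      generalize f (q⁻¹ * (q⁻¹ * x)) = t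
      field_simp
      ring
end

section
/- After the affine transformations X̃ = a/(bq(q-1)) X - a/(b(q-1)) I, Ỹ = b q^{-1} Y - a^{-1}b I, Z̃ = -a^{-1} Z - a^{-1}b I (where I is the identity operator), the Pastro-algebra relations take the standardized form: for every function f : ℝ → ℝ and every real x ≠ 0, (i) q(X̃Ỹ f)(x) - (ỸX̃ f)(x) = f(x); (ii) q(ỸZ̃ f)(x) - (Z̃Ỹ f)(x) = α₁ (X̃f)(x) + α₂ f(x); (iii) q(Z̃X̃ f)(x) - (X̃Z̃ f)(x) = f(x), where α₁ = a^{-2} b q^{-1} (q-1)^2 (q+1) and α₂ = a^{-2} q^{-1} (q-1)(ab + aq + bq). -/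
/-- The affinely transformed operator `X̃ = a/(bq(q-1)) X - a/(b(q-1)) I`. -/
noncomputable def opXt (q a b : ℝ) (f : ℝ → ℝ) (x : ℝ) : ℝ :=
  a / (b * q * (q - 1)) * opX q b f x - a / (b * (q - 1)) * f x

/-- The affinely transformed operator `Ỹ = b q⁻¹ Y - a⁻¹ b I`. -/
noncomputable def opYt (q a b : ℝ) (f : ℝ → ℝ) (x : ℝ) : ℝ :=
  b * q⁻¹ * opY q a b f x - a⁻¹ * b * f x

/-- The affinely transformed operator `Z̃ = -a⁻¹ Z - a⁻¹ b I`. -/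
noncomputable def opZt (q a b : ℝ) (f : ℝ → ℝ) (x : ℝ) : ℝ :=
  -a⁻¹ * opZ q b f x - a⁻¹ * b * f x

set_option maxHeartbeats 4000000
/-- The standardized Pastro-algebra relations for the affinely transformed
operators `X̃, Ỹ, Z̃`. -/
theorem pastro_algebra_standardized (q a b : ℝ) (hq0 : q ≠ 0) (hq1 : q ≠ 1) (ha : a ≠ 0) (hb : b ≠ 0)
    (f : ℝ → ℝ) (x : ℝ) (hx : x ≠ 0) :
    (q * opXt q a b (opYt q a b f) x - opYt q a b (opXt q a b f) x = f x) ∧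
    (q * opYt q a b (opZt q a b f) x - opZt q a b (opYt q a b f) x =
        a⁻¹ ^ 2 * b * q⁻¹ * (q - 1) ^ 2 * (q + 1) * opXt q a b f x +
          a⁻¹ ^ 2 * q⁻¹ * (q - 1) * (a * b + a * q + b * q) * f x) ∧
    (q * opZt q a b (opXt q a b f) x - opXt q a b (opZt q a b f) x = f x) := by
  have hq1' : q - 1 ≠ 0 := sub_ne_zero.mpr hq1
  have h1 : q⁻¹ * (q * x) = x := by field_simp
  have h2 : q * (q⁻¹ * x) = x := by field_simp
  refine ⟨?_, ?_, ?_⟩ <;>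
  · simp only [opXt, opYt, opZt, opX, opY, opZ, h1, h2, mul_inv_rev, inv_inv]
    generalize f x = A
    generalize f (q⁻¹ * x) = B
    generalize f (q * x) = C
    generalize f (q⁻¹ * (q⁻¹ * x)) = D
    generalize f (q * (q * x)) = E
    field_simp
    ring
end

section
/- The Casimir element is central in the Pastro algebra realized by q-difference operators: define Q = (q^{-2} - 1) X̃ỸZ̃ + q^{-1} α₁ X̃² + q^{-1}(q^{-1} + 1)( α₂ X̃ + q^{-1} Ỹ + Z̃ ), where α₁ = a^{-2} b q^{-1} (q-1)^2 (q+1) and α₂ = a^{-2} q^{-1} (q-1)(ab + aq + bq). Then Q commutes with each of X̃, Ỹ, Z̃, i.e. for every function f : ℝ → ℝ and every real x ≠ 0, (QX̃ f)(x) = (X̃Q f)(x), (QỸ f)(x) = (ỸQ f)(x), and (QZ̃ f)(x) = (Z̃Q f)(x). -/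
/-- Structure constant `α₁` of the Pastro algebra. -/
noncomputable def alpha1 (q a b : ℝ) : ℝ := a⁻¹ ^ 2 * b * q⁻¹ * (q - 1) ^ 2 * (q + 1)

/-- Structure constant `α₂` of the Pastro algebra. -/
noncomputable def alpha2 (q a b : ℝ) : ℝ := a⁻¹ ^ 2 * q⁻¹ * (q - 1) * (a * b + a * q + b * q)

/-- The Casimir element `Q` of the Pastro algebra. -/
noncomputable def casimirQ (q a b : ℝ) (f : ℝ → ℝ) (x : ℝ) : ℝ :=
  (q⁻¹ ^ 2 - 1) * opXt q a b (opYt q a b (opZt q a b f)) x +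
    q⁻¹ * alpha1 q a b * opXt q a b (opXt q a b f) x +
    q⁻¹ * (q⁻¹ + 1) *
      (alpha2 q a b * opXt q a b f x + q⁻¹ * opYt q a b f x + opZt q a b f x)


private lemma Xt_apply (q a b : ℝ) (hq0 : q ≠ 0) (hq1 : q - 1 ≠ 0) (hb : b ≠ 0) (f : ℝ → ℝ)
    (x : ℝ) :
    opXt q a b f x = a * (x - q) / (b * q * (q - 1)) * f (q⁻¹ * x)
      - a * x / (q * (q - 1)) * f x := by
  unfold opXt opX
  field_simp
  ring

private lemma Yt_apply (q a b : ℝ) (hq0 : q ≠ 0) (ha : a ≠ 0) (hb : b ≠ 0) (f : ℝ → ℝ) (x : ℝ) :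
    opYt q a b f x = b / q * (x - q / a) * f (q * x) - x / q * f x := by
  unfold opYt opY
  field_simp
  ring

private lemma Zt_apply (q a b : ℝ) (ha : a ≠ 0) (f : ℝ → ℝ) (x : ℝ) (hx : x ≠ 0) :
    opZt q a b f x = (q - x) / (a * x) * f (q⁻¹ * x) - q / (a * x) * f x := by
  unfold opZt opZ
  field_simp
  ring

set_option maxHeartbeats 4000000 in
/-- The Casimir element acts as the scalar `-(q+1)(a+b+q)/(a q^3)`. -/
private lemma casimirQ_eq_smul (q a b : ℝ) (hq0 : q ≠ 0) (hq1' : q - 1 ≠ 0) (ha : a ≠ 0)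
    (hb : b ≠ 0) (g : ℝ → ℝ) (y : ℝ) (hy : y ≠ 0) :
    casimirQ q a b g y = -((q + 1) * (a + b + q)) / (a * q ^ 3) * g y := by
  simp only [casimirQ, alpha1, alpha2, Xt_apply q a b hq0 hq1' hb, Yt_apply q a b hq0 ha hb,
    Zt_apply q a b ha, ne_eq, mul_eq_zero, inv_eq_zero, hq0, hy, or_self, not_false_eq_true,
    false_or, or_false]
  simp only [← mul_assoc, mul_inv_cancel₀ hq0, inv_mul_cancel₀ hq0, one_mul, mul_inv, inv_inv]
  set c0 := g y
  set c1 := g (q⁻¹ * y)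
  set c2 := g (q⁻¹ * q⁻¹ * y)
  set d1 := g (q * y)
  field_simp
  ring

/-- The Casimir element `Q` is central in the Pastro algebra realized by
q-difference operators. -/
theorem pastro_casimir_central (q a b : ℝ) (hq0 : q ≠ 0) (hq1 : q ≠ 1) (ha : a ≠ 0) (hb : b ≠ 0)
    (f : ℝ → ℝ) (x : ℝ) (hx : x ≠ 0) :
    (casimirQ q a b (opXt q a b f) x = opXt q a b (casimirQ q a b f) x) ∧
    (casimirQ q a b (opYt q a b f) x = opYt q a b (casimirQ q a b f) x) ∧
    (casimirQ q a b (opZt q a b f) x = opZt q a b (casimirQ q a b f) x) := by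
  have hq1' : q - 1 ≠ 0 := sub_ne_zero.mpr hq1
  have hqx : q⁻¹ * x ≠ 0 := mul_ne_zero (inv_ne_zero hq0) hx
  have hqx' : q * x ≠ 0 := mul_ne_zero hq0 hx
  have K := casimirQ_eq_smul q a b hq0 hq1' ha hb
  refine ⟨?_, ?_, ?_⟩
  · rw [K _ x hx, Xt_apply q a b hq0 hq1' hb (casimirQ q a b f) x, K f _ hqx, K f x hx,
      Xt_apply q a b hq0 hq1' hb f x]
    ring
  · rw [K _ x hx, Yt_apply q a b hq0 ha hb (casimirQ q a b f) x, K f _ hqx', K f x hx,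
      Yt_apply q a b hq0 ha hb f x]
    ring
  · rw [K _ x hx, Zt_apply q a b ha (casimirQ q a b f) x hx, K f _ hqx, K f x hx,
      Zt_apply q a b ha f x hx]
    ring
end
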